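/- (Soundness of the final automaton) Fix an fLTL\GU formula φ and let A be the final automaton for φ, the product of the master LTS M and the slave product P, with acceptance condition ⋁_{R ⊆ Rec} (Acc_M(R) ∧ Acc(R)). Then for every infinite word w: if w ∈ L(A) then w ⊨ φ. -/

import Mathlib

open Filter

attribute [local instance] Classical.propDecidable

noncomputable section

namespace Paper

/-- Comparison extremes: limit inferior or limit superior. -/
inductive Ext where
  | inf : Ext
  | sup : Ext

/-- Comparison operators `≥` and `>`. -/
inductive Cmp where
  | ge : Cmp
  | gt : Cmp

/-- Interpretation of a comparison operator on reals. -/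
def Cmp.rel : Cmp → ℝ → ℝ → Prop
  | .ge, x, y => x ≥ y
  | .gt, x, y => x > y

/-- Cesàro averages of a real sequence. -/
def cesaro (q : ℕ → ℝ) (n : ℕ) : ℝ := (∑ j ∈ Finset.range n, q j) / (n : ℝ)

/-- `lr_inf`/`lr_sup`: liminf/limsup of the Cesàro averages. -/
def lr : Ext → (ℕ → ℝ) → ℝ
  | .inf, q => Filter.liminf (cesaro q) Filter.atTop
  | .sup, q => Filter.limsup (cesaro q) Filter.atTop

/-- Real-valued indicator of a proposition. -/
def ind (P : Prop) : ℝ := if P then 1 else 0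

/-- Formulas of frequency LTL (fLTL) over atomic propositions `Ap`,
in negation normal form. -/
inductive FLTL (Ap : Type) where
  | tt : FLTL Ap
  | ff : FLTL Ap
  | atom (a : Ap) : FLTL Ap
  | natom (a : Ap) : FLTL Ap
  | conj (φ ψ : FLTL Ap) : FLTL Ap
  | disj (φ ψ : FLTL Ap) : FLTL Ap
  | next (φ : FLTL Ap) : FLTL Ap
  | fut (φ : FLTL Ap) : FLTL Ap
  | glob (φ : FLTL Ap) : FLTL Ap
  | untl (φ ψ : FLTL Ap) : FLTL Ap
  | freq (e : Ext) (c : Cmp) (p : ℚ) (φ : FLTL Ap) : FLTL Ap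

/-- Infinite words over the alphabet `2^Ap`. -/
abbrev Word (Ap : Type) := ℕ → Set Ap

/-- The suffix `w^k` of an infinite word. -/
def suffixW {Ap : Type} (w : Word Ap) (k : ℕ) : Word Ap := fun i => w (k + i)

/-- Semantics of fLTL: `Sat φ w` means `w ⊨ φ`. -/
def Sat {Ap : Type} : FLTL Ap → Word Ap → Prop
  | .tt, _ => True
  | .ff, _ => False
  | .atom a, w => a ∈ w 0
  | .natom a, w => a ∉ w 0
  | .conj φ ψ, w => Sat φ w ∧ Sat ψ w
  | .disj φ ψ, w => Sat φ w ∨ Sat ψ w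
  | .next φ, w => Sat φ (suffixW w 1)
  | .fut φ, w => ∃ k, Sat φ (suffixW w k)
  | .glob φ, w => ∀ k, Sat φ (suffixW w k)
  | .untl φ ψ, w => ∃ k, Sat ψ (suffixW w k) ∧ ∀ j < k, Sat φ (suffixW w j)
  | .freq e c p φ, w => c.rel (lr e (fun i => ind (Sat φ (suffixW w i)))) (p : ℝ)

/-- `U`-free formulas (the grammar `ξ` of the fragment). -/
def UFree {Ap : Type} : FLTL Ap → Prop
  | .conj φ ψ => UFree φ ∧ UFree ψ
  | .disj φ ψ => UFree φ ∧ UFree ψ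
  | .next φ => UFree φ
  | .fut φ => UFree φ
  | .glob φ => UFree φ
  | .freq _ _ _ φ => UFree φ
  | .untl _ _ => False
  | _ => True

/-- The fragment fLTL∖GU: no `U` inside the scope of `G` or `G^{⋈p}_ext`. -/
def InFrag {Ap : Type} : FLTL Ap → Prop
  | .conj φ ψ => InFrag φ ∧ InFrag ψ
  | .disj φ ψ => InFrag φ ∧ InFrag ψ
  | .next φ => InFrag φ
  | .fut φ => InFrag φ
  | .untl φ ψ => InFrag φ ∧ InFrag ψ
  | .glob φ => UFree φ
  | .freq _ _ _ φ => UFree φ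
  | _ => True

/-- One-step unfolding `Unf`. -/
def unf {Ap : Type} : FLTL Ap → FLTL Ap
  | .conj φ ψ => .conj (unf φ) (unf ψ)
  | .disj φ ψ => .disj (unf φ) (unf ψ)
  | .fut φ => .disj (unf φ) (.next (.fut φ))
  | .glob φ => .conj (unf φ) (.next (.glob φ))
  | .untl φ ψ => .disj (unf ψ) (.conj (unf φ) (.next (.untl φ ψ)))
  | .freq e c p φ => .conj .tt (.next (.freq e c p φ))
  | φ => φ

/-- The next-step operator `ψ[ν]` for a letter `ν ⊆ Ap`. -/
def step {Ap : Type} : FLTL Ap → Set Ap → FLTL Ap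
  | .conj φ ψ, ν => .conj (step φ ν) (step ψ ν)
  | .disj φ ψ, ν => .disj (step φ ν) (step ψ ν)
  | .atom a, ν => if a ∈ ν then .tt else .ff
  | .natom a, ν => if a ∈ ν then .ff else .tt
  | .next φ, _ => φ
  | φ, _ => φ

/-- Non-Boolean formulas: those that are not conjunctions or disjunctions. -/
def nonBool {Ap : Type} : FLTL Ap → Prop
  | .conj _ _ => False
  | .disj _ _ => False
  | _ => True

/-- Extension of a propositional assignment (on non-Boolean formulas)
through conjunction and disjunction; `tt` and `ff` get their truth values. -/
def evalA {Ap : Type} (A : FLTL Ap → Prop) : FLTL Ap → Prop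
  | .tt => True
  | .ff => False
  | .conj φ ψ => evalA A φ ∧ evalA A ψ
  | .disj φ ψ => evalA A φ ∨ evalA A ψ
  | φ => A φ

/-- Propositional provability `Φ ⊢ ψ`. -/
def pproves {Ap : Type} (Φ : Set (FLTL Ap)) (ψ : FLTL Ap) : Prop :=
  ∀ A : FLTL Ap → Prop, (∀ χ ∈ Φ, evalA A χ) → evalA A ψ

/-- Propositional equivalence `≡_P`. -/
def pequiv {Ap : Type} (φ ψ : FLTL Ap) : Prop :=
  pproves {φ} ψ ∧ pproves {ψ} φ

/-- The set of subformulas of a formula (including itself). -/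
def subf {Ap : Type} : FLTL Ap → Set (FLTL Ap)
  | .conj φ ψ => insert (.conj φ ψ) (subf φ ∪ subf ψ)
  | .disj φ ψ => insert (.disj φ ψ) (subf φ ∪ subf ψ)
  | .next φ => insert (.next φ) (subf φ)
  | .fut φ => insert (.fut φ) (subf φ)
  | .glob φ => insert (.glob φ) (subf φ)
  | .untl φ ψ => insert (.untl φ ψ) (subf φ ∪ subf ψ)
  | .freq e c p φ => insert (.freq e c p φ) (subf φ)
  | φ => {φ}

/-- `sf(φ)`: the set of non-Boolean subformulas of `φ`. -/
def sfSet {Ap : Type} (φ : FLTL Ap) : Set (FLTL Ap) := {ψ ∈ subf φ | nonBool ψ}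

/-- Formulas of the shapes `Fξ`, `Gξ`, `G^{⋈p}_ext ξ`. -/
def isRecShape {Ap : Type} : FLTL Ap → Prop
  | .fut _ => True
  | .glob _ => True
  | .freq _ _ _ _ => True
  | _ => False

/-- `Rec`: the set of `F`-, `G`-, and `G^{⋈p}_ext`-subformulas of `φ`. -/
def RecSet {Ap : Type} (φ : FLTL Ap) : Set (FLTL Ap) := {ψ ∈ subf φ | isRecShape ψ}

/-- The defining condition of membership in `R(w)`. -/
def RsatCond {Ap : Type} (w : Word Ap) : FLTL Ap → Prop
  | .fut ξ => Sat (.glob (.fut ξ)) w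
  | .glob ξ => Sat (.fut (.glob ξ)) w
  | .freq e c p ξ => Sat (.freq e c p ξ) w
  | _ => False

/-- `R(w)`: elements of `Rec` eventually always satisfied on `w`. -/
def Rsat {Ap : Type} (φ : FLTL Ap) (w : Word Ap) : Set (FLTL Ap) :=
  {ψ ∈ RecSet φ | RsatCond w ψ}

/-- The threshold `T(w)`: the smallest `T` such that for all `t ≥ T` every
formula of `R(w)` holds at `w^t` and every formula of `Rec ∖ R(w)` fails at `w^t`. -/
def threshold {Ap : Type} (φ : FLTL Ap) (w : Word Ap) : ℕ :=
  sInf {T : ℕ | ∀ t, T ≤ t →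
    (∀ ψ ∈ Rsat φ w, Sat ψ (suffixW w t)) ∧
    (∀ ψ ∈ RecSet φ, ψ ∉ Rsat φ w → ¬ Sat ψ (suffixW w t))}

/-- Sinks of slave transition systems: `ψ[ν] = ψ` for every letter `ν`. -/
def isSink {Ap : Type} (ψ : FLTL Ap) : Prop := ∀ ν : Set Ap, step ψ ν = ψ

/-- Run of the slave LTS `S(ξ)` on a finite word: undefined (`none`) as soon as
a transition from a sink would be needed. -/
def slaveRunList {Ap : Type} : FLTL Ap → List (Set Ap) → Option (FLTL Ap)
  | ψ, [] => some ψ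
  | ψ, ν :: rest => if isSink ψ then none else slaveRunList (step ψ ν) rest

/-- The finite word `w[i] w[i+1] ⋯ w[i+len-1]`. -/
def segWord {Ap : Type} (w : Word Ap) (i len : ℕ) : List (Set Ap) :=
  (List.range len).map (fun k => w (i + k))

/-- `S(ξ)(w[i..j])`: the state of the slave LTS after reading `w[i]⋯w[j]`. -/
def readSeg {Ap : Type} (ξ : FLTL Ap) (w : Word Ap) (i j : ℕ) : Option (FLTL Ap) :=
  slaveRunList ξ (segWord w i (j + 1 - i))

/-- The state, at time `n`, of the slave token born at time `b`
(having read `w[b]⋯w[n-1]`). -/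
def tokState {Ap : Type} (ξ : FLTL Ap) (w : Word Ap) (b n : ℕ) : Option (FLTL Ap) :=
  slaveRunList ξ (segWord w b (n - b))

/-- `Sat(R)`: positions from which the slave run reaches an `R`-provable state. -/
def SatSet {Ap : Type} (R : Set (FLTL Ap)) (ξ : FLTL Ap) (w : Word Ap) : Set ℕ :=
  {i | ∃ j ≥ i, ∃ ψ, readSeg ξ w i j = some ψ ∧ pproves R ψ}

/-- The token (subset-construction) run of the slave automata for `ξ` on `w`:
at each step all non-sink tokens move and a fresh token is put on `ξ`. -/
def tokenSet {Ap : Type} (ξ : FLTL Ap) (w : Word Ap) : ℕ → Set (FLTL Ap)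
  | 0 => {ξ}
  | n + 1 => insert ξ ((fun ψ => step ψ (w n)) '' {ψ ∈ tokenSet ξ w n | ¬ isSink ψ})

/-- Acceptance of the Büchi slave automaton `S_GF(ξ,R)`:
infinitely often some token lies in an accepting (R-provable) sink. -/
def buchiAcc {Ap : Type} (R : Set (FLTL Ap)) (ξ : FLTL Ap) (w : Word Ap) : Prop :=
  ∃ᶠ n in atTop, ∃ ψ ∈ tokenSet ξ w n, isSink ψ ∧ pproves R ψ

/-- Acceptance of the co-Büchi slave automaton `S_FG(ξ,R)`:
only finitely often some token lies in a rejecting (non-R-provable) sink. -/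
def coBuchiAcc {Ap : Type} (R : Set (FLTL Ap)) (ξ : FLTL Ap) (w : Word Ap) : Prop :=
  ∀ᶠ n in atTop, ¬ ∃ ψ ∈ tokenSet ξ w n, isSink ψ ∧ ¬ pproves R ψ

/-- The counting function (state of the mean-payoff slave automaton) at time `n`:
the number of tokens currently in state `ψ`. -/
def tokenCount {Ap : Type} (ξ : FLTL Ap) (w : Word Ap) (n : ℕ) (ψ : FLTL Ap) : ℕ :=
  ((Finset.range (n + 1)).filter (fun b => tokState ξ w b n = some ψ)).card

/-- The reward `r(R)` of a counting state: total number of tokens in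
accepting (R-provable) sinks. -/
def mpRewardFn {Ap : Type} (R : Set (FLTL Ap)) (f : FLTL Ap → ℕ) : ℝ :=
  ∑' ψ : {χ : FLTL Ap // isSink χ ∧ pproves R χ}, (f ψ.1 : ℝ)

/-- Acceptance of the mean-payoff slave automaton `S_{G^{⋈p}_ext}(ξ,R)`. -/
def mpAcc {Ap : Type} (R : Set (FLTL Ap)) (ξ : FLTL Ap) (w : Word Ap)
    (e : Ext) (c : Cmp) (p : ℚ) : Prop :=
  c.rel (lr e (fun n => mpRewardFn R (tokenCount ξ w n))) (p : ℝ)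

/-- Acceptance of the slave automaton for a formula of `Rec`, with assumptions `R`. -/
def slaveAccept {Ap : Type} (R : Set (FLTL Ap)) (w : Word Ap) : FLTL Ap → Prop
  | .fut ξ => buchiAcc R ξ w
  | .glob ξ => coBuchiAcc R ξ w
  | .freq e c p ξ => mpAcc R ξ w e c p
  | _ => True

/-- `w ∈ L(P(R))`: the product of the slaves accepts `w` with the condition
`Acc(R) = ⋀_{ξ ∈ R} Acc_ξ(R)`. -/
def productAccept {Ap : Type} (R : Set (FLTL Ap)) (w : Word Ap) : Prop :=
  ∀ ψ ∈ R, slaveAccept R w ψ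

/-- The run of the master transition system on `w`. -/
def masterRun {Ap : Type} (φ : FLTL Ap) (w : Word Ap) : ℕ → FLTL Ap
  | 0 => φ
  | n + 1 => step (unf (masterRun φ w n)) (w n)

/-- The propositional substitution `χ[X/ff]`: replace each non-Boolean
formula belonging to `X` by `ff`. -/
def substFF {Ap : Type} (X : Set (FLTL Ap)) : FLTL Ap → FLTL Ap
  | .conj φ ψ => .conj (substFF X φ) (substFF X ψ)
  | .disj φ ψ => .disj (substFF X φ) (substFF X ψ)
  | φ => if φ ∈ X then .ff else φ

/-- The master acceptance condition `Acc_M(R)`: eventually, the current master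
formula is provable from `R` together with all tokens of the slaves of
`G`-formulas of `R`, with `Rec ∖ R` substituted by `ff`. -/
def masterAcc {Ap : Type} (φ : FLTL Ap) (R : Set (FLTL Ap)) (w : Word Ap) : Prop :=
  ∀ᶠ n in atTop,
    pproves
      (R ∪ ⋃ (ξ : FLTL Ap) (_ : FLTL.glob ξ ∈ R),
        substFF (RecSet φ \ R) '' tokenSet ξ w n)
      (masterRun φ w n)

/-- `w ∈ L(A)` for the final automaton `A` (master × slave product) of `φ`. -/
def finalAccept {Ap : Type} (φ : FLTL Ap) (w : Word Ap) : Prop :=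
  ∃ R ⊆ RecSet φ, masterAcc φ R w ∧ productAccept R w


/-! ### Auxiliary machinery for the soundness proof -/

section Soundness

variable {Ap : Type}

/-- Size of a formula. -/
def sizeF : FLTL Ap → ℕ
  | .conj a b => sizeF a + sizeF b + 1
  | .disj a b => sizeF a + sizeF b + 1
  | .next a => sizeF a + 1
  | .fut a => sizeF a + 1
  | .glob a => sizeF a + 1
  | .untl a b => sizeF a + sizeF b + 1
  | .freq _ _ _ a => sizeF a + 1
  | _ => 1

@[simp] lemma suffixW_zero (w : Word Ap) : suffixW w 0 = w := by
  funext i; simp [suffixW]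

lemma suffixW_suffixW (w : Word Ap) (a b : ℕ) :
    suffixW (suffixW w a) b = suffixW w (a + b) := by
  funext i; simp [suffixW, Nat.add_assoc]

lemma evalA_sat (u : Word Ap) : ∀ ψ : FLTL Ap, evalA (fun χ => Sat χ u) ψ ↔ Sat ψ u := by
  intro ψ
  induction ψ with
  | tt => simp [evalA, Sat]
  | ff => simp [evalA, Sat]
  | conj a b iha ihb => simp [evalA, Sat, iha, ihb]
  | disj a b iha ihb => simp [evalA, Sat, iha, ihb]
  | _ => simp [evalA]


lemma substFF_nonBool (X : Set (FLTL Ap)) (χ : FLTL Ap) (h : nonBool χ) :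
    substFF X χ = if χ ∈ X then .ff else χ := by
  cases χ <;> simp_all [substFF, nonBool]

lemma substFF_mono_sat {X Y : Set (FLTL Ap)} (hXY : X ⊆ Y) (u : Word Ap) :
    ∀ χ : FLTL Ap, Sat (substFF Y χ) u → Sat (substFF X χ) u := by
  intro χ
  have leaf : ∀ χ' : FLTL Ap, nonBool χ' → Sat (substFF Y χ') u → Sat (substFF X χ') u := by
    intro χ' hnb
    rw [substFF_nonBool X χ' hnb, substFF_nonBool Y χ' hnb]
    by_cases hY : χ' ∈ Y
    · simp [hY, Sat]
    · have hX : χ' ∉ X := fun h => hY (hXY h)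
      simp [hX, hY]
  induction χ with
  | conj a b iha ihb =>
      simp only [substFF, Sat]; exact fun h => ⟨iha h.1, ihb h.2⟩
  | disj a b iha ihb =>
      simp only [substFF, Sat]; exact fun h => h.imp iha ihb
  | tt => exact leaf _ trivial
  | ff => exact leaf _ trivial
  | atom a => exact leaf _ trivial
  | natom a => exact leaf _ trivial
  | next a _ => exact leaf _ trivial
  | fut a _ => exact leaf _ trivial
  | glob a _ => exact leaf _ trivial
  | untl a b _ _ => exact leaf _ trivial
  | freq e c p a _ => exact leaf _ trivial

lemma substFF_empty : ∀ χ : FLTL Ap, substFF (∅ : Set (FLTL Ap)) χ = χ := by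
  intro χ
  induction χ with
  | conj a b iha ihb => simp [substFF, iha, ihb]
  | disj a b iha ihb => simp [substFF, iha, ihb]
  | _ => simp [substFF]

lemma substFF_weaken (X : Set (FLTL Ap)) (u : Word Ap) (χ : FLTL Ap)
    (h : Sat (substFF X χ) u) : Sat χ u := by
  have := substFF_mono_sat (Set.empty_subset X) u χ h
  rwa [substFF_empty] at this

/-- Guarded formulas: boolean combinations of literals, `tt`, `ff` and `X`-formulas. -/
def Guarded : FLTL Ap → Prop
  | .conj a b => Guarded a ∧ Guarded b
  | .disj a b => Guarded a ∧ Guarded b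
  | .fut _ => False
  | .glob _ => False
  | .untl _ _ => False
  | .freq _ _ _ _ => False
  | _ => True

lemma step_guarded_sat (u : Word Ap) :
    ∀ χ : FLTL Ap, Guarded χ → (Sat χ u ↔ Sat (step χ (u 0)) (suffixW u 1)) := by
  intro χ
  induction χ with
  | conj a b iha ihb => intro h; simp only [step, Sat]; rw [iha h.1, ihb h.2]
  | disj a b iha ihb => intro h; simp only [step, Sat]; rw [iha h.1, ihb h.2]
  | tt => intro _; simp [step, Sat]
  | ff => intro _; simp [step, Sat]
  | atom a =>
      intro _; simp only [step, Sat]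
      by_cases h : a ∈ u 0 <;> simp [h, Sat]
  | natom a =>
      intro _; simp only [step, Sat]
      by_cases h : a ∈ u 0 <;> simp [h, Sat]
  | next a _ => intro _; simp [step, Sat]
  | fut a _ => intro h; exact absurd h (by simp [Guarded])
  | glob a _ => intro h; exact absurd h (by simp [Guarded])
  | untl a b _ _ => intro h; exact absurd h (by simp [Guarded])
  | freq e c p a _ => intro h; exact absurd h (by simp [Guarded])

lemma unf_guarded : ∀ χ : FLTL Ap, Guarded (unf χ) := by
  intro χ
  induction χ with
  | conj a b iha ihb => exact ⟨iha, ihb⟩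
  | disj a b iha ihb => exact ⟨iha, ihb⟩
  | fut a iha => exact ⟨iha, trivial⟩
  | glob a iha => exact ⟨iha, trivial⟩
  | untl a b iha ihb => exact ⟨ihb, iha, trivial⟩
  | freq e c p a _ => exact ⟨trivial, trivial⟩
  | _ => trivial

lemma sat_fut_unfold (u : Word Ap) (φ : FLTL Ap) :
    Sat (.fut φ) u ↔ Sat φ u ∨ Sat (.fut φ) (suffixW u 1) := by
  constructor
  · rintro ⟨k, hk⟩
    cases k with
    | zero => left; rwa [suffixW_zero] at hk
    | succ k => right; exact ⟨k, by rwa [suffixW_suffixW, Nat.add_comm]⟩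
  · rintro (h | ⟨k, hk⟩)
    · exact ⟨0, by rwa [suffixW_zero]⟩
    · exact ⟨k + 1, by rwa [suffixW_suffixW, Nat.add_comm] at hk⟩

lemma sat_glob_unfold (u : Word Ap) (φ : FLTL Ap) :
    Sat (.glob φ) u ↔ Sat φ u ∧ Sat (.glob φ) (suffixW u 1) := by
  constructor
  · intro h
    refine ⟨by have := h 0; rwa [suffixW_zero] at this, fun k => ?_⟩
    rw [suffixW_suffixW, Nat.add_comm]; exact h (k + 1)
  · rintro ⟨h0, h⟩ k
    cases k with
    | zero => rwa [suffixW_zero]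
    | succ k => rw [Nat.add_comm]; rw [← suffixW_suffixW]; exact h k

lemma sat_untl_unfold (u : Word Ap) (φ ψ : FLTL Ap) :
    Sat (.untl φ ψ) u ↔ Sat ψ u ∨ (Sat φ u ∧ Sat (.untl φ ψ) (suffixW u 1)) := by
  constructor
  · rintro ⟨k, hk, hall⟩
    cases k with
    | zero => left; rwa [suffixW_zero] at hk
    | succ k =>
        right
        refine ⟨by have := hall 0 (Nat.succ_pos k); rwa [suffixW_zero] at this, k, ?_, ?_⟩
        · rwa [suffixW_suffixW, Nat.add_comm]
        · intro j hj
          rw [suffixW_suffixW, Nat.add_comm]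
          exact hall (j + 1) (Nat.succ_lt_succ hj)
  · rintro (h | ⟨h0, k, hk, hall⟩)
    · exact ⟨0, by rwa [suffixW_zero], fun j hj => absurd hj (Nat.not_lt_zero j)⟩
    · refine ⟨k + 1, by rwa [suffixW_suffixW, Nat.add_comm] at hk, fun j hj => ?_⟩
      cases j with
      | zero => rwa [suffixW_zero]
      | succ j =>
          have := hall j (Nat.lt_of_succ_lt_succ hj)
          rwa [suffixW_suffixW, Nat.add_comm] at this

lemma ind_nonneg (P : Prop) : 0 ≤ ind P := by unfold ind; split_ifs <;> norm_num

lemma ind_le_one (P : Prop) : ind P ≤ 1 := by unfold ind; split_ifs <;> norm_num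

lemma cesaro_nonneg {q : ℕ → ℝ} (hq : ∀ i, 0 ≤ q i) (n : ℕ) : 0 ≤ cesaro q n := by
  unfold cesaro
  apply div_nonneg (Finset.sum_nonneg fun i _ => hq i) (by positivity)

lemma cesaro_le {q : ℕ → ℝ} {B : ℝ} (hB : 0 ≤ B) (hq : ∀ i, q i ≤ B) (n : ℕ) :
    cesaro q n ≤ B := by
  unfold cesaro
  rcases Nat.eq_zero_or_pos n with rfl | hn
  · simpa using hB
  · rw [div_le_iff₀ (by positivity)]
    calc ∑ j ∈ Finset.range n, q j ≤ ∑ j ∈ Finset.range n, B :=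
          Finset.sum_le_sum fun i _ => hq i
      _ = n * B := by rw [Finset.sum_const, Finset.card_range]; ring
      _ = B * n := by ring

lemma liminf_le_liminf_of_eps {f g : ℕ → ℝ} {C : ℝ}
    (hf0 : ∀ n, 0 ≤ f n) (hg0 : ∀ n, 0 ≤ g n) (hgC : ∀ n, g n ≤ C)
    (h : ∀ ε : ℝ, 0 < ε → ∀ᶠ n in atTop, f n ≤ g n + ε) :
    liminf f atTop ≤ liminf g atTop := by
  have hbf : IsBoundedUnder (· ≥ ·) (atTop : Filter ℕ) f :=
    isBoundedUnder_of ⟨0, fun n => hf0 n⟩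
  have hbg : IsBoundedUnder (· ≥ ·) (atTop : Filter ℕ) g :=
    isBoundedUnder_of ⟨0, fun n => hg0 n⟩
  have hcg : IsCoboundedUnder (· ≥ ·) (atTop : Filter ℕ) g :=
    (isBoundedUnder_of ⟨C, fun n => hgC n⟩ :
      IsBoundedUnder (· ≤ ·) (atTop : Filter ℕ) g).isCoboundedUnder_ge
  refine le_of_forall_pos_le_add fun ε hε => ?_
  have hcg' : IsCoboundedUnder (· ≥ ·) (atTop : Filter ℕ) (fun n => g n + ε) :=
    (isBoundedUnder_of ⟨C + ε, fun n => add_le_add_left (hgC n) ε⟩ :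
      IsBoundedUnder (· ≤ ·) (atTop : Filter ℕ) _).isCoboundedUnder_ge
  calc liminf f atTop ≤ liminf (fun n => g n + ε) atTop :=
        liminf_le_liminf (h ε hε) hbf hcg'
    _ = liminf g atTop + ε := liminf_add_const atTop g ε hcg hbg

lemma limsup_le_limsup_of_eps {f g : ℕ → ℝ} {C : ℝ}
    (hf0 : ∀ n, 0 ≤ f n) (hg0 : ∀ n, 0 ≤ g n) (hgC : ∀ n, g n ≤ C)
    (h : ∀ ε : ℝ, 0 < ε → ∀ᶠ n in atTop, f n ≤ g n + ε) :
    limsup f atTop ≤ limsup g atTop := by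
  have hcf : IsCoboundedUnder (· ≤ ·) (atTop : Filter ℕ) f :=
    (isBoundedUnder_of ⟨0, fun n => hf0 n⟩ :
      IsBoundedUnder (· ≥ ·) (atTop : Filter ℕ) f).isCoboundedUnder_le
  have hbg : IsBoundedUnder (· ≤ ·) (atTop : Filter ℕ) g :=
    isBoundedUnder_of ⟨C, fun n => hgC n⟩
  have hcg : IsCoboundedUnder (· ≤ ·) (atTop : Filter ℕ) g :=
    (isBoundedUnder_of ⟨0, fun n => hg0 n⟩ :
      IsBoundedUnder (· ≥ ·) (atTop : Filter ℕ) g).isCoboundedUnder_le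
  refine le_of_forall_pos_le_add fun ε hε => ?_
  have hbg' : IsBoundedUnder (· ≤ ·) (atTop : Filter ℕ) (fun n => g n + ε) :=
    isBoundedUnder_of ⟨C + ε, fun n => add_le_add_left (hgC n) ε⟩
  calc limsup f atTop ≤ limsup (fun n => g n + ε) atTop :=
        limsup_le_limsup (h ε hε) hcf hbg'
    _ = limsup g atTop + ε := limsup_add_const atTop g ε hbg hcg

/-- One-sided comparison of `lr` values. -/
lemma lr_le_lr {f g : ℕ → ℝ} {C : ℝ}
    (hf0 : ∀ n, 0 ≤ cesaro f n) (hg0 : ∀ n, 0 ≤ cesaro g n) (hgC : ∀ n, cesaro g n ≤ C)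
    (h : ∀ ε : ℝ, 0 < ε → ∀ᶠ n in atTop, cesaro f n ≤ cesaro g n + ε) (e : Ext) :
    lr e f ≤ lr e g := by
  cases e
  · exact liminf_le_liminf_of_eps hf0 hg0 hgC h
  · exact limsup_le_limsup_of_eps hf0 hg0 hgC h

lemma cmp_rel_mono {c : Cmp} {x y : ℝ} (p : ℝ) (h : c.rel x p) (hxy : x ≤ y) : c.rel y p := by
  cases c
  · exact le_trans h hxy
  · exact lt_of_lt_of_le h hxy

lemma eventually_one_div_le {ε : ℝ} (hε : 0 < ε) :
    ∀ᶠ n : ℕ in atTop, 1 / (n : ℝ) ≤ ε := by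
  have := tendsto_one_div_atTop_nhds_zero_nat (𝕜 := ℝ)
  filter_upwards [this.eventually (gt_mem_nhds hε)] with n hn using le_of_lt hn

/-- Shift invariance of `lr` for `[0,1]`-valued sequences. -/
lemma lr_shift {q : ℕ → ℝ} (hq0 : ∀ i, 0 ≤ q i) (hq1 : ∀ i, q i ≤ 1) (e : Ext) :
    lr e (fun i => q (i + 1)) = lr e q := by
  set q' : ℕ → ℝ := fun i => q (i + 1) with hq'
  have hq'0 : ∀ i, 0 ≤ q' i := fun i => hq0 (i + 1)
  have hq'1 : ∀ i, q' i ≤ 1 := fun i => hq1 (i + 1)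
  have hsum : ∀ n : ℕ, ∑ j ∈ Finset.range n, q' j = (∑ j ∈ Finset.range (n + 1), q j) - q 0 := by
    intro n
    rw [Finset.sum_range_succ']
    simp [hq']
  have hS0 : ∀ n : ℕ, 0 ≤ ∑ j ∈ Finset.range n, q j :=
    fun n => Finset.sum_nonneg fun i _ => hq0 i
  have hS1 : ∀ n : ℕ, (∑ j ∈ Finset.range n, q j) ≤ n := by
    intro n
    calc (∑ j ∈ Finset.range n, q j) ≤ ∑ j ∈ Finset.range n, 1 :=
          Finset.sum_le_sum fun i _ => hq1 i
      _ = n := by simp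
  have key1 : ∀ n : ℕ, 1 ≤ n → cesaro q' n ≤ cesaro q (n + 1) + 1 / n := by
    intro n hn
    have hn0 : (0 : ℝ) < n := by exact_mod_cast hn
    have hn1 : (0 : ℝ) < (n : ℝ) + 1 := by linarith
    unfold cesaro
    rw [hsum n]
    have hA1 : (∑ j ∈ Finset.range (n + 1), q j) ≤ (n : ℝ) + 1 := by
      have := hS1 (n + 1); push_cast at this ⊢; linarith
    have hA0 := hS0 (n + 1)
    have hq00 := hq0 0
    push_cast
    rw [div_add_div _ _ (ne_of_gt hn1) (ne_of_gt hn0), div_le_div_iff₀ hn0 (by positivity)]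
    nlinarith [hS0 (n + 1), mul_le_mul_of_nonneg_right hA1 (le_of_lt hn0),
      mul_nonneg hq00 (le_of_lt hn0), mul_nonneg (mul_nonneg hq00 (le_of_lt hn0)) (le_of_lt hn0)]
  have key2 : ∀ n : ℕ, 1 ≤ n → cesaro q (n + 1) ≤ cesaro q' n + 1 / n := by
    intro n hn
    have hn0 : (0 : ℝ) < n := by exact_mod_cast hn
    have hn1 : (0 : ℝ) < (n : ℝ) + 1 := by linarith
    unfold cesaro
    rw [hsum n]
    have hA1 : (∑ j ∈ Finset.range (n + 1), q j) ≤ (n : ℝ) + 1 := by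
      have := hS1 (n + 1); push_cast at this ⊢; linarith
    have hA0 := hS0 (n + 1)
    have hq00 := hq0 0
    have hq01 := hq1 0
    have hAq : q 0 ≤ ∑ j ∈ Finset.range (n + 1), q j :=
      Finset.single_le_sum (f := q) (fun i _ => hq0 i) (by simp)
    push_cast
    rw [div_add_div _ _ (ne_of_gt hn0) (ne_of_gt hn0), div_le_div_iff₀ hn1 (by positivity)]
    nlinarith
  have hc'0 : ∀ n, 0 ≤ cesaro q' n := cesaro_nonneg hq'0
  have hc'1 : ∀ n, cesaro q' n ≤ 1 := cesaro_le zero_le_one hq'1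
  have hc0 : ∀ n, 0 ≤ cesaro q n := cesaro_nonneg hq0
  have hc1 : ∀ n, cesaro q n ≤ 1 := cesaro_le zero_le_one hq1
  have heps1 : ∀ ε : ℝ, 0 < ε → ∀ᶠ n in atTop, cesaro q' n ≤ (fun n => cesaro q (n + 1)) n + ε := by
    intro ε hε
    filter_upwards [eventually_one_div_le hε, eventually_ge_atTop 1] with n h1 h2
    show cesaro q' n ≤ cesaro q (n + 1) + ε
    linarith [key1 n h2]
  have heps2 : ∀ ε : ℝ, 0 < ε → ∀ᶠ n in atTop, (fun n => cesaro q (n + 1)) n ≤ cesaro q' n + ε := by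
    intro ε hε
    filter_upwards [eventually_one_div_le hε, eventually_ge_atTop 1] with n h1 h2
    show cesaro q (n + 1) ≤ cesaro q' n + ε
    linarith [key2 n h2]
  have hshift_inf : liminf (fun n => cesaro q (n + 1)) atTop = liminf (cesaro q) atTop :=
    liminf_nat_add (cesaro q) 1
  have hshift_sup : limsup (fun n => cesaro q (n + 1)) atTop = limsup (cesaro q) atTop :=
    limsup_nat_add (cesaro q) 1
  cases e
  · show liminf (cesaro q') atTop = liminf (cesaro q) atTop
    refine le_antisymm ?_ ?_
    · exact (liminf_le_liminf_of_eps hc'0 (fun n => hc0 (n + 1)) (fun n => hc1 (n + 1))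
        heps1).trans (le_of_eq hshift_inf)
    · exact (le_of_eq hshift_inf.symm).trans
        (liminf_le_liminf_of_eps (fun n => hc0 (n + 1)) hc'0 hc'1 heps2)
  · show limsup (cesaro q') atTop = limsup (cesaro q) atTop
    refine le_antisymm ?_ ?_
    · exact (limsup_le_limsup_of_eps hc'0 (fun n => hc0 (n + 1)) (fun n => hc1 (n + 1))
        heps1).trans (le_of_eq hshift_sup)
    · exact (le_of_eq hshift_sup.symm).trans
        (limsup_le_limsup_of_eps (fun n => hc0 (n + 1)) hc'0 hc'1 heps2)

lemma sat_freq_shift (u : Word Ap) (e : Ext) (c : Cmp) (p : ℚ) (ξ : FLTL Ap) :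
    Sat (.freq e c p ξ) u ↔ Sat (.freq e c p ξ) (suffixW u 1) := by
  simp only [Sat]
  have hfun : (fun i => ind (Sat ξ (suffixW (suffixW u 1) i))) =
      fun i => ind (Sat ξ (suffixW u (i + 1))) := by
    funext i; rw [suffixW_suffixW, Nat.add_comm]
  rw [hfun, lr_shift (q := fun i => ind (Sat ξ (suffixW u i))) (fun i => ind_nonneg _) (fun i => ind_le_one _) e]

lemma unf_sat (u : Word Ap) : ∀ χ : FLTL Ap, Sat (unf χ) u ↔ Sat χ u := by
  intro χ
  induction χ with
  | conj a b iha ihb => simp only [unf, Sat]; rw [iha, ihb]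
  | disj a b iha ihb => simp only [unf, Sat]; rw [iha, ihb]
  | fut a iha =>
      have h0 : Sat (unf (FLTL.fut a)) u ↔ Sat (unf a) u ∨ Sat (FLTL.fut a) (suffixW u 1) :=
        Iff.rfl
      rw [h0, iha, ← sat_fut_unfold]
  | glob a iha =>
      have h0 : Sat (unf (FLTL.glob a)) u ↔ Sat (unf a) u ∧ Sat (FLTL.glob a) (suffixW u 1) :=
        Iff.rfl
      rw [h0, iha, ← sat_glob_unfold]
  | untl a b iha ihb =>
      have h0 : Sat (unf (FLTL.untl a b)) u ↔
          Sat (unf b) u ∨ (Sat (unf a) u ∧ Sat (FLTL.untl a b) (suffixW u 1)) := Iff.rfl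
      rw [h0, iha, ihb, ← sat_untl_unfold]
  | freq e c p a _ =>
      have h0 : Sat (unf (FLTL.freq e c p a)) u ↔
          (True ∧ Sat (FLTL.freq e c p a) (suffixW u 1)) := Iff.rfl
      rw [h0, ← sat_freq_shift]
      simp
  | _ => simp [unf]

lemma masterRun_sat (φ : FLTL Ap) (w : Word Ap) (n : ℕ)
    (h : Sat (masterRun φ w n) (suffixW w n)) : Sat φ w := by
  induction n with
  | zero => rwa [suffixW_zero] at h
  | succ n ih =>
      apply ih
      rw [unf_sat (suffixW w n) (masterRun φ w n) |>.symm]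
      rw [step_guarded_sat _ _ (unf_guarded _)]
      have h1 : (suffixW w n) 0 = w n := by simp [suffixW]
      rw [h1, suffixW_suffixW]
      exact h

lemma mem_subf_self : ∀ χ : FLTL Ap, χ ∈ subf χ := by
  intro χ; cases χ <;> simp [subf]

lemma subf_trans : ∀ χ σ : FLTL Ap, σ ∈ subf χ → subf σ ⊆ subf χ := by
  intro χ
  induction χ with
  | conj a b iha ihb =>
      intro σ hσ
      simp only [subf, Set.mem_insert_iff, Set.mem_union] at hσ
      rcases hσ with rfl | h | h
      · exact subset_rfl
      · exact (iha σ h).trans (by intro x hx; simp [subf]; tauto)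
      · exact (ihb σ h).trans (by intro x hx; simp [subf]; tauto)
  | disj a b iha ihb =>
      intro σ hσ
      simp only [subf, Set.mem_insert_iff, Set.mem_union] at hσ
      rcases hσ with rfl | h | h
      · exact subset_rfl
      · exact (iha σ h).trans (by intro x hx; simp [subf]; tauto)
      · exact (ihb σ h).trans (by intro x hx; simp [subf]; tauto)
  | untl a b iha ihb =>
      intro σ hσ
      simp only [subf, Set.mem_insert_iff, Set.mem_union] at hσ
      rcases hσ with rfl | h | h
      · exact subset_rfl
      · exact (iha σ h).trans (by intro x hx; simp [subf]; tauto)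
      · exact (ihb σ h).trans (by intro x hx; simp [subf]; tauto)
  | next a iha =>
      intro σ hσ
      simp only [subf, Set.mem_insert_iff] at hσ
      rcases hσ with rfl | h
      · exact subset_rfl
      · exact (iha σ h).trans (by intro x hx; simp [subf]; tauto)
  | fut a iha =>
      intro σ hσ
      simp only [subf, Set.mem_insert_iff] at hσ
      rcases hσ with rfl | h
      · exact subset_rfl
      · exact (iha σ h).trans (by intro x hx; simp [subf]; tauto)
  | glob a iha =>
      intro σ hσ
      simp only [subf, Set.mem_insert_iff] at hσ
      rcases hσ with rfl | h
      · exact subset_rfl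
      · exact (iha σ h).trans (by intro x hx; simp [subf]; tauto)
  | freq e c p a iha =>
      intro σ hσ
      simp only [subf, Set.mem_insert_iff] at hσ
      rcases hσ with rfl | h
      · exact subset_rfl
      · exact (iha σ h).trans (by intro x hx; simp [subf]; tauto)
  | tt => intro σ hσ; simp only [subf, Set.mem_singleton_iff] at hσ; subst hσ; exact subset_rfl
  | ff => intro σ hσ; simp only [subf, Set.mem_singleton_iff] at hσ; subst hσ; exact subset_rfl
  | atom a =>
      intro σ hσ; simp only [subf, Set.mem_singleton_iff] at hσ; subst hσ; exact subset_rfl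
  | natom a =>
      intro σ hσ; simp only [subf, Set.mem_singleton_iff] at hσ; subst hσ; exact subset_rfl

lemma subf_finite : ∀ χ : FLTL Ap, (subf χ).Finite := by
  intro χ
  induction χ with
  | conj a b iha ihb => exact (Set.Finite.union iha ihb).insert _
  | disj a b iha ihb => exact (Set.Finite.union iha ihb).insert _
  | untl a b iha ihb => exact (Set.Finite.union iha ihb).insert _
  | next a iha => exact iha.insert _
  | fut a iha => exact iha.insert _
  | glob a iha => exact iha.insert _
  | freq e c p a iha => exact iha.insert _
  | tt => exact Set.finite_singleton _
  | ff => exact Set.finite_singleton _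
  | atom a => exact Set.finite_singleton _
  | natom a => exact Set.finite_singleton _

lemma sizeF_le_of_subf : ∀ χ σ : FLTL Ap, σ ∈ subf χ → sizeF σ ≤ sizeF χ := by
  intro χ
  induction χ with
  | conj a b iha ihb =>
      intro σ hσ
      simp only [subf, Set.mem_insert_iff, Set.mem_union] at hσ
      rcases hσ with rfl | h | h
      · exact le_rfl
      · exact (iha σ h).trans (by simp [sizeF]; omega)
      · exact (ihb σ h).trans (by simp [sizeF]; omega)
  | disj a b iha ihb =>
      intro σ hσ
      simp only [subf, Set.mem_insert_iff, Set.mem_union] at hσ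
      rcases hσ with rfl | h | h
      · exact le_rfl
      · exact (iha σ h).trans (by simp [sizeF]; omega)
      · exact (ihb σ h).trans (by simp [sizeF]; omega)
  | untl a b iha ihb =>
      intro σ hσ
      simp only [subf, Set.mem_insert_iff, Set.mem_union] at hσ
      rcases hσ with rfl | h | h
      · exact le_rfl
      · exact (iha σ h).trans (by simp [sizeF]; omega)
      · exact (ihb σ h).trans (by simp [sizeF]; omega)
  | next a iha =>
      intro σ hσ
      simp only [subf, Set.mem_insert_iff] at hσ
      rcases hσ with rfl | h
      · exact le_rfl
      · exact (iha σ h).trans (by simp [sizeF])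
  | fut a iha =>
      intro σ hσ
      simp only [subf, Set.mem_insert_iff] at hσ
      rcases hσ with rfl | h
      · exact le_rfl
      · exact (iha σ h).trans (by simp [sizeF])
  | glob a iha =>
      intro σ hσ
      simp only [subf, Set.mem_insert_iff] at hσ
      rcases hσ with rfl | h
      · exact le_rfl
      · exact (iha σ h).trans (by simp [sizeF])
  | freq e c p a iha =>
      intro σ hσ
      simp only [subf, Set.mem_insert_iff] at hσ
      rcases hσ with rfl | h
      · exact le_rfl
      · exact (iha σ h).trans (by simp [sizeF])
  | tt => intro σ hσ; simp only [subf, Set.mem_singleton_iff] at hσ; subst hσ; exact le_rfl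
  | ff => intro σ hσ; simp only [subf, Set.mem_singleton_iff] at hσ; subst hσ; exact le_rfl
  | atom a =>
      intro σ hσ; simp only [subf, Set.mem_singleton_iff] at hσ; subst hσ; exact le_rfl
  | natom a =>
      intro σ hσ; simp only [subf, Set.mem_singleton_iff] at hσ; subst hσ; exact le_rfl

/-- Active depth of a formula: number of steps until the slave reaches a sink. -/
def ad : FLTL Ap → ℕ
  | .conj a b => max (ad a) (ad b)
  | .disj a b => max (ad a) (ad b)
  | .atom _ => 1
  | .natom _ => 1
  | .next a => ad a + 1
  | _ => 0

lemma step_eq_of_ad_zero : ∀ χ : FLTL Ap, ad χ = 0 → ∀ ν, step χ ν = χ := by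
  intro χ
  induction χ with
  | conj a b iha ihb =>
      intro h ν
      simp only [ad, Nat.max_eq_zero_iff] at h
      simp only [step, iha h.1, ihb h.2]
  | disj a b iha ihb =>
      intro h ν
      simp only [ad, Nat.max_eq_zero_iff] at h
      simp only [step, iha h.1, ihb h.2]
  | atom a => intro h; simp [ad] at h
  | natom a => intro h; simp [ad] at h
  | next a _ => intro h; simp [ad] at h
  | _ => intro _ ν; simp [step]

lemma ad_step : ∀ (χ : FLTL Ap) (ν : Set Ap), ad (step χ ν) = ad χ - 1 := by
  intro χ
  induction χ with
  | conj a b iha ihb =>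
      intro ν; simp only [step, ad, iha, ihb]; omega
  | disj a b iha ihb =>
      intro ν; simp only [step, ad, iha, ihb]; omega
  | atom a =>
      intro ν; simp only [step]; split_ifs <;> simp [ad]
  | natom a =>
      intro ν; simp only [step]; split_ifs <;> simp [ad]
  | next a _ => intro ν; simp [step, ad]
  | _ => intro ν; simp [step, ad]

lemma isSink_iff_ad_zero (χ : FLTL Ap) : isSink χ ↔ ad χ = 0 := by
  constructor
  · intro h
    have := ad_step χ ∅
    rw [h ∅] at this
    omega
  · intro h ν
    exact step_eq_of_ad_zero χ h ν

/-- The run of a slave from state `χ` starting at time `m`. -/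
def runFrom (w : Word Ap) (χ : FLTL Ap) (m : ℕ) : ℕ → FLTL Ap
  | 0 => χ
  | k + 1 => step (runFrom w χ m k) (w (m + k))

lemma ad_runFrom (w : Word Ap) (χ : FLTL Ap) (m : ℕ) :
    ∀ k, ad (runFrom w χ m k) = ad χ - k := by
  intro k
  induction k with
  | zero => simp [runFrom]
  | succ k ih => simp only [runFrom, ad_step, ih]; omega

lemma runFrom_not_sink (w : Word Ap) (χ : FLTL Ap) (m : ℕ) {k : ℕ} (hk : k < ad χ) :
    ¬ isSink (runFrom w χ m k) := by
  rw [isSink_iff_ad_zero, ad_runFrom]; omega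

lemma runFrom_sink_ad (w : Word Ap) (χ : FLTL Ap) (m : ℕ) :
    isSink (runFrom w χ m (ad χ)) := by
  rw [isSink_iff_ad_zero, ad_runFrom]; omega

lemma self_mem_tokenSet (ξ : FLTL Ap) (w : Word Ap) (n : ℕ) : ξ ∈ tokenSet ξ w n := by
  cases n <;> simp [tokenSet]

lemma runFrom_mem_tokenSet (ξ : FLTL Ap) (w : Word Ap) {χ : FLTL Ap} {n : ℕ}
    (hχ : χ ∈ tokenSet ξ w n) :
    ∀ k, (∀ j < k, ¬ isSink (runFrom w χ n j)) → runFrom w χ n k ∈ tokenSet ξ w (n + k) := by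
  intro k
  induction k with
  | zero => intro _; simpa [runFrom] using hχ
  | succ k ih =>
      intro h
      have h1 : runFrom w χ n k ∈ tokenSet ξ w (n + k) := ih fun j hj => h j (by omega)
      have h2 : ¬ isSink (runFrom w χ n k) := h k (by omega)
      have : runFrom w χ n (k + 1) ∈
          (fun ψ => step ψ (w (n + k))) '' {ψ ∈ tokenSet ξ w (n + k) | ¬ isSink ψ} :=
        ⟨runFrom w χ n k, ⟨h1, h2⟩, rfl⟩
      rw [show n + (k + 1) = (n + k) + 1 by omega]
      exact Set.mem_insert_iff.2 (Or.inr this)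

lemma segWord_succ (w : Word Ap) (i len : ℕ) :
    segWord w i (len + 1) = segWord w i len ++ [w (i + len)] := by
  simp [segWord, List.range_succ]

lemma slaveRunList_append_single :
    ∀ (l : List (Set Ap)) (χ : FLTL Ap) (ν : Set Ap),
      slaveRunList χ (l ++ [ν]) =
        (slaveRunList χ l).bind (fun ρ => if isSink ρ then none else some (step ρ ν)) := by
  intro l
  induction l with
  | nil => intro χ ν; simp [slaveRunList]
  | cons μ rest ih =>
      intro χ ν
      simp only [List.cons_append, slaveRunList]
      split_ifs with h
      · rfl
      · exact ih (step χ μ) ν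

lemma slaveRunList_seg (w : Word Ap) (χ : FLTL Ap) (m : ℕ) :
    ∀ k, slaveRunList χ (segWord w m k) =
      if ∀ j < k, ¬ isSink (runFrom w χ m j) then some (runFrom w χ m k) else none := by
  intro k
  induction k with
  | zero => simp [segWord, slaveRunList, runFrom]
  | succ k ih =>
      rw [segWord_succ, slaveRunList_append_single, ih]
      by_cases hall : ∀ j < k, ¬ isSink (runFrom w χ m j)
      · rw [if_pos hall, Option.bind_some]
        by_cases hs : isSink (runFrom w χ m k)
        · have : ¬ ∀ j < k + 1, ¬ isSink (runFrom w χ m j) := by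
            intro hc; exact hc k (by omega) hs
          simp [hs, this]
          exact ⟨k, le_rfl, hs⟩
        · have : ∀ j < k + 1, ¬ isSink (runFrom w χ m j) := by
            intro j hj
            rcases Nat.lt_succ_iff_lt_or_eq.1 hj with h | rfl
            · exact hall j h
            · exact hs
          rw [if_neg hs, if_pos this]
          rfl
      · have : ¬ ∀ j < k + 1, ¬ isSink (runFrom w χ m j) := by
          intro hc; exact hall fun j hj => hc j (by omega)
        rw [if_neg hall, if_neg this]
        rfl

lemma tokState_eq (ξ : FLTL Ap) (w : Word Ap) (b n : ℕ) :
    tokState ξ w b n =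
      if ∀ j < n - b, ¬ isSink (runFrom w ξ b j) then some (runFrom w ξ b (n - b)) else none :=
  slaveRunList_seg w ξ b (n - b)

lemma tokState_some (ξ : FLTL Ap) (w : Word Ap) {b n : ℕ} {ψ : FLTL Ap}
    (h : tokState ξ w b n = some ψ) :
    ψ = runFrom w ξ b (n - b) ∧ ∀ j < n - b, ¬ isSink (runFrom w ξ b j) := by
  rw [tokState_eq] at h
  split_ifs at h with hc
  exact ⟨(Option.some_injective _ h).symm, hc⟩

lemma tokState_le (ξ : FLTL Ap) (w : Word Ap) {b n : ℕ} {ψ : FLTL Ap}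
    (h : tokState ξ w b n = some ψ) : n ≤ b + ad ξ := by
  by_contra hc
  have h2 := (tokState_some ξ w h).2
  exact h2 (ad ξ) (by omega) (runFrom_sink_ad w ξ b)

lemma tokState_none_after (ξ : FLTL Ap) (w : Word Ap) {b n n2 : ℕ} {ψ : FLTL Ap}
    (hb : b ≤ n) (h : tokState ξ w b n = some ψ) (hs : isSink ψ) (hn : n < n2) :
    tokState ξ w b n2 = none := by
  obtain ⟨rfl, _⟩ := tokState_some ξ w h
  rw [tokState_eq]
  have : ¬ ∀ j < n2 - b, ¬ isSink (runFrom w ξ b j) := by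
    intro hc; exact hc (n - b) (by omega) hs
  simp [this]

lemma mem_tokenSet_iff (ξ : FLTL Ap) (w : Word Ap) :
    ∀ n (ψ : FLTL Ap), ψ ∈ tokenSet ξ w n ↔ ∃ b ≤ n, tokState ξ w b n = some ψ := by
  intro n
  induction n with
  | zero =>
      intro ψ
      simp only [tokenSet, Set.mem_singleton_iff]
      constructor
      · rintro rfl
        exact ⟨0, le_rfl, by simp [tokState, segWord, slaveRunList]⟩
      · rintro ⟨b, hb, h⟩
        interval_cases b
        simpa [tokState, segWord, slaveRunList] using h.symm
  | succ n ih =>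
      intro ψ
      have hstep : ∀ b, b ≤ n → tokState ξ w b (n + 1) =
          (tokState ξ w b n).bind (fun ρ => if isSink ρ then none else some (step ρ (w n))) := by
        intro b hb
        have h1 : n + 1 - b = (n - b) + 1 := by omega
        have h2 : b + (n - b) = n := by omega
        rw [tokState, h1, segWord_succ, h2, slaveRunList_append_single]
        rfl
      constructor
      · intro hψ
        simp only [tokenSet] at hψ
        rcases Set.mem_insert_iff.1 hψ with rfl | ⟨ρ, ⟨hρ, hns⟩, rfl⟩
        · exact ⟨n + 1, le_rfl, by simp [tokState, segWord, slaveRunList]⟩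
        · obtain ⟨b, hb, hst⟩ := (ih ρ).1 hρ
          refine ⟨b, by omega, ?_⟩
          rw [hstep b hb, hst]
          simp [hns]
      · rintro ⟨b, hb, hst⟩
        rcases Nat.lt_succ_iff_lt_or_eq.1 (Nat.lt_succ_of_le hb) with hlt | rfl
        · have hb' : b ≤ n := by omega
          rw [hstep b hb'] at hst
          rcases Option.bind_eq_some_iff.1 hst with ⟨ρ, hρ, hif⟩
          split_ifs at hif with hs
          show ψ ∈ tokenSet ξ w (n + 1)
          simp only [tokenSet]
          refine Set.mem_insert_iff.2 (Or.inr ?_)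
          exact ⟨ρ, ⟨(ih ρ).2 ⟨b, hb', hρ⟩, hs⟩, Option.some_injective _ hif⟩
        · have h0 : tokState ξ w (n + 1) (n + 1) = some ξ := by
            simp [tokState, segWord, slaveRunList]
          rw [h0] at hst
          have h1 : ξ = ψ := Option.some_injective _ hst
          rw [← h1]
          exact self_mem_tokenSet ξ w (n + 1)

lemma sat_freq_suffix_iff (w : Word Ap) (e : Ext) (c : Cmp) (p : ℚ) (ξ : FLTL Ap) :
    ∀ t, Sat (.freq e c p ξ) (suffixW w t) ↔ Sat (.freq e c p ξ) w := by
  intro t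
  induction t with
  | zero => rw [suffixW_zero]
  | succ t ih =>
      rw [← ih, sat_freq_shift (suffixW w t) e c p ξ, suffixW_suffixW]

lemma rec_eventually_const (w : Word Ap) :
    ∀ σ : FLTL Ap, ∃ v : Prop,
      isRecShape σ → ∀ᶠ t in atTop, (Sat σ (suffixW w t) ↔ v) := by
  intro σ
  cases σ with
  | fut ξ =>
      by_cases hc : ∃ m, ∀ k, m ≤ k → ¬ Sat ξ (suffixW w k)
      · refine ⟨False, fun _ => ?_⟩
        obtain ⟨m, hm⟩ := hc
        filter_upwards [eventually_ge_atTop m] with t ht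
        simp only [iff_false, Sat]
        rintro ⟨k, hk⟩
        rw [suffixW_suffixW] at hk
        exact hm (t + k) (by omega) hk
      · refine ⟨True, fun _ => Filter.Eventually.of_forall fun t => ?_⟩
        push_neg at hc
        obtain ⟨k, hk, hsat⟩ := hc t
        simp only [iff_true, Sat]
        exact ⟨k - t, by rw [suffixW_suffixW, show t + (k - t) = k by omega]; exact hsat⟩
  | glob ξ =>
      by_cases hc : ∃ m, Sat (.glob ξ) (suffixW w m)
      · refine ⟨True, fun _ => ?_⟩
        obtain ⟨m, hm⟩ := hc
        filter_upwards [eventually_ge_atTop m] with t ht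
        simp only [iff_true, Sat]
        intro k
        have := hm (t - m + k)
        rw [suffixW_suffixW, show m + (t - m + k) = t + k by omega] at this
        rwa [suffixW_suffixW]
      · refine ⟨False, fun _ => Filter.Eventually.of_forall fun t => ?_⟩
        simp only [iff_false]
        exact fun h => hc ⟨t, h⟩
  | freq e c p ξ =>
      exact ⟨Sat (.freq e c p ξ) w, fun _ =>
        Filter.Eventually.of_forall fun t => sat_freq_suffix_iff w e c p ξ t⟩
  | _ => exact ⟨True, by simp [isRecShape]⟩

lemma exists_stab (φ : FLTL Ap) (w : Word Ap) :
    ∃ T, ∀ σ ∈ RecSet φ, ∀ t t', T ≤ t → T ≤ t' →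
      (Sat σ (suffixW w t) ↔ Sat σ (suffixW w t')) := by
  choose v hv using rec_eventually_const w
  have hfin : (RecSet φ).Finite :=
    (subf_finite φ).subset fun σ hσ => hσ.1
  have hall : ∀ᶠ t in atTop, ∀ σ ∈ RecSet φ, (Sat σ (suffixW w t) ↔ v σ) :=
    (Set.Finite.eventually_all hfin).2 fun σ hσ => hv σ hσ.2
  obtain ⟨T, hT⟩ := Filter.eventually_atTop.1 hall
  refine ⟨T, fun σ hσ t t' ht ht' => ?_⟩
  rw [hT t ht σ hσ, hT t' ht' σ hσ]

lemma rsatCond_eventually {w : Word Ap} {σ : FLTL Ap} (h : RsatCond w σ) :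
    ∀ᶠ t in atTop, Sat σ (suffixW w t) := by
  cases σ with
  | fut ξ =>
      refine Filter.Eventually.of_forall fun t => ?_
      exact h t
  | glob ξ =>
      obtain ⟨m, hm⟩ := h
      filter_upwards [eventually_ge_atTop m] with t ht
      intro k
      have := hm (t - m + k)
      rw [suffixW_suffixW, show m + (t - m + k) = t + k by omega] at this
      rwa [suffixW_suffixW]
  | freq e c p ξ =>
      exact Filter.Eventually.of_forall fun t => (sat_freq_suffix_iff w e c p ξ t).2 h
  | tt => exact absurd h (by simp [RsatCond])
  | ff => exact absurd h (by simp [RsatCond])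
  | atom a => exact absurd h (by simp [RsatCond])
  | natom a => exact absurd h (by simp [RsatCond])
  | conj a b => exact absurd h (by simp [RsatCond])
  | disj a b => exact absurd h (by simp [RsatCond])
  | next a => exact absurd h (by simp [RsatCond])
  | untl a b => exact absurd h (by simp [RsatCond])

/-- Until-shaped formulas. -/
def isUntlShape : FLTL Ap → Prop
  | .untl _ _ => True
  | _ => False

/-- The substitution set: `Rec ∖ R` together with all until-formulas. -/
def XSet (φ : FLTL Ap) (R : Set (FLTL Ap)) : Set (FLTL Ap) :=
  (RecSet φ \ R) ∪ {σ | isUntlShape σ}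

lemma mem_XSet_shape {φ : FLTL Ap} {R : Set (FLTL Ap)} {σ : FLTL Ap} (h : σ ∈ XSet φ R) :
    isRecShape σ ∨ isUntlShape σ := by
  rcases h with ⟨⟨_, hs⟩, _⟩ | hs
  · exact Or.inl hs
  · exact Or.inr hs

lemma untl_mem_XSet {φ : FLTL Ap} {R : Set (FLTL Ap)} {σ : FLTL Ap} (h : isUntlShape σ) :
    σ ∈ XSet φ R := Or.inr h

lemma not_mem_XSet {φ : FLTL Ap} {R : Set (FLTL Ap)} {σ : FLTL Ap}
    (h1 : ¬ isRecShape σ) (h2 : ¬ isUntlShape σ) : σ ∉ XSet φ R :=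
  fun h => (mem_XSet_shape h).elim h1 h2

lemma tt_not_mem_XSet {φ : FLTL Ap} {R : Set (FLTL Ap)} : FLTL.tt ∉ XSet φ R :=
  not_mem_XSet (by simp [isRecShape]) (by simp [isUntlShape])

lemma mem_XSet_of_mem_R {φ : FLTL Ap} {R : Set (FLTL Ap)} {σ : FLTL Ap}
    (hR : σ ∈ R) (h : ¬ isUntlShape σ) : σ ∉ XSet φ R := by
  rintro (⟨_, hn⟩ | hs)
  · exact hn hR
  · exact h hs

lemma subf_conj_left {a b : FLTL Ap} : subf a ⊆ subf (.conj a b) := by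
  intro x hx; simp [subf]; tauto

lemma subf_conj_right {a b : FLTL Ap} : subf b ⊆ subf (.conj a b) := by
  intro x hx; simp [subf]; tauto

lemma subf_disj_left {a b : FLTL Ap} : subf a ⊆ subf (.disj a b) := by
  intro x hx; simp [subf]; tauto

lemma subf_disj_right {a b : FLTL Ap} : subf b ⊆ subf (.disj a b) := by
  intro x hx; simp [subf]; tauto

lemma subf_next {a : FLTL Ap} : subf a ⊆ subf (.next a) := by
  intro x hx; simp [subf]; tauto

/-- Backward one-step transfer for pessimistically substituted slave states. -/
lemma step_back (φ0 : FLTL Ap) (R : Set (FLTL Ap)) (u : Word Ap) :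
    ∀ χ : FLTL Ap,
      (∀ σ ∈ subf χ, isRecShape σ → σ ∉ XSet φ0 R →
        (Sat σ (suffixW u 1) → Sat σ u)) →
      Sat (substFF (XSet φ0 R) (step χ (u 0))) (suffixW u 1) →
      Sat (substFF (XSet φ0 R) χ) u := by
  intro χ
  induction χ with
  | conj a b iha ihb =>
      intro hrec h
      simp only [step, substFF, Sat] at h ⊢
      exact ⟨iha (fun σ hσ => hrec σ (subf_conj_left hσ)) h.1,
        ihb (fun σ hσ => hrec σ (subf_conj_right hσ)) h.2⟩
  | disj a b iha ihb =>
      intro hrec h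
      simp only [step, substFF, Sat] at h ⊢
      exact h.imp (iha fun σ hσ => hrec σ (subf_disj_left hσ))
        (ihb fun σ hσ => hrec σ (subf_disj_right hσ))
  | tt =>
      intro _ _
      rw [substFF_nonBool _ _ (by trivial), if_neg tt_not_mem_XSet]
      trivial
  | ff =>
      intro _ h
      simp only [step] at h
      rw [substFF_nonBool _ _ (by trivial),
        if_neg (not_mem_XSet (by simp [isRecShape]) (by simp [isUntlShape]))] at h ⊢
      exact absurd h (by simp [Sat])
  | atom a =>
      intro _ h
      rw [substFF_nonBool _ _ (by trivial),
        if_neg (not_mem_XSet (by simp [isRecShape]) (by simp [isUntlShape]))]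
      simp only [step] at h
      by_cases hm : a ∈ u 0
      · simpa [Sat] using hm
      · rw [if_neg hm, substFF_nonBool _ _ (by trivial),
          if_neg (not_mem_XSet (by simp [isRecShape]) (by simp [isUntlShape]))] at h
        exact absurd h (by simp [Sat])
  | natom a =>
      intro _ h
      rw [substFF_nonBool _ _ (by trivial),
        if_neg (not_mem_XSet (by simp [isRecShape]) (by simp [isUntlShape]))]
      simp only [step] at h
      by_cases hm : a ∈ u 0
      · rw [if_pos hm, substFF_nonBool _ _ (by trivial),
          if_neg (not_mem_XSet (by simp [isRecShape]) (by simp [isUntlShape]))] at h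
        exact absurd h (by simp [Sat])
      · simpa [Sat] using hm
  | next a ih =>
      intro _ h
      rw [substFF_nonBool _ _ (by trivial),
        if_neg (not_mem_XSet (by simp [isRecShape]) (by simp [isUntlShape]))]
      simp only [step] at h
      show Sat a (suffixW u 1)
      exact substFF_weaken _ _ _ h
  | fut a ih =>
      intro hrec h
      simp only [step] at h
      by_cases hX : FLTL.fut a ∈ XSet φ0 R
      · rwa [substFF_nonBool _ _ (by trivial), if_pos hX] at h ⊢
      · rw [substFF_nonBool _ _ (by trivial), if_neg hX] at h ⊢
        exact hrec _ (mem_subf_self _) (by trivial) hX h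
  | glob a ih =>
      intro hrec h
      simp only [step] at h
      by_cases hX : FLTL.glob a ∈ XSet φ0 R
      · rwa [substFF_nonBool _ _ (by trivial), if_pos hX] at h ⊢
      · rw [substFF_nonBool _ _ (by trivial), if_neg hX] at h ⊢
        exact hrec _ (mem_subf_self _) (by trivial) hX h
  | freq e c p a ih =>
      intro hrec h
      simp only [step] at h
      by_cases hX : FLTL.freq e c p a ∈ XSet φ0 R
      · rwa [substFF_nonBool _ _ (by trivial), if_pos hX] at h ⊢
      · rw [substFF_nonBool _ _ (by trivial), if_neg hX] at h ⊢
        exact hrec _ (mem_subf_self _) (by trivial) hX h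
  | untl a b iha ihb =>
      intro _ h
      simp only [step] at h
      rwa [substFF_nonBool _ _ (by trivial), if_pos (untl_mem_XSet (by trivial))] at h ⊢

/-- Rec-shaped subformulas survive stepping backwards. -/
lemma recsub_step : ∀ (χ : FLTL Ap) (ν : Set Ap) (σ : FLTL Ap), isRecShape σ →
    σ ∈ subf (step χ ν) → σ ∈ subf χ := by
  intro χ
  induction χ with
  | conj a b iha ihb =>
      intro ν σ hσ hmem
      simp only [step, subf, Set.mem_insert_iff, Set.mem_union] at hmem ⊢
      rcases hmem with rfl | h | h
      · exact absurd hσ (by simp [isRecShape])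
      · exact Or.inr (Or.inl (iha ν σ hσ h))
      · exact Or.inr (Or.inr (ihb ν σ hσ h))
  | disj a b iha ihb =>
      intro ν σ hσ hmem
      simp only [step, subf, Set.mem_insert_iff, Set.mem_union] at hmem ⊢
      rcases hmem with rfl | h | h
      · exact absurd hσ (by simp [isRecShape])
      · exact Or.inr (Or.inl (iha ν σ hσ h))
      · exact Or.inr (Or.inr (ihb ν σ hσ h))
  | atom a =>
      intro ν σ hσ hmem
      simp only [step] at hmem
      split_ifs at hmem <;>
        (simp only [subf, Set.mem_singleton_iff] at hmem; subst hmem;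
          exact absurd hσ (by simp [isRecShape]))
  | natom a =>
      intro ν σ hσ hmem
      simp only [step] at hmem
      split_ifs at hmem <;>
        (simp only [subf, Set.mem_singleton_iff] at hmem; subst hmem;
          exact absurd hσ (by simp [isRecShape]))
  | next a iha =>
      intro ν σ hσ hmem
      exact subf_next hmem
  | _ =>
      intro ν σ hσ hmem
      simpa [step] using hmem

lemma recsub_runFrom (w : Word Ap) (χ : FLTL Ap) (m : ℕ) :
    ∀ k σ, isRecShape σ → σ ∈ subf (runFrom w χ m k) → σ ∈ subf χ := by
  intro k
  induction k with
  | zero => intro σ _ h; exact h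
  | succ k ih =>
      intro σ hσ h
      exact ih σ hσ (recsub_step _ _ σ hσ h)

/-- Backward chain transfer along a slave run. -/
lemma chain_back (φ0 : FLTL Ap) (R : Set (FLTL Ap)) (w : Word Ap) (χ : FLTL Ap) (m : ℕ) :
    ∀ k : ℕ,
      (∀ σ, isRecShape σ → σ ∈ subf χ → σ ∉ XSet φ0 R →
        ∀ j t, m ≤ j → m ≤ t → (Sat σ (suffixW w j) → Sat σ (suffixW w t))) →
      Sat (substFF (XSet φ0 R) (runFrom w χ m k)) (suffixW w (m + k)) →
      Sat (substFF (XSet φ0 R) χ) (suffixW w m) := by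
  intro k
  induction k with
  | zero => intro _ h; simpa [runFrom] using h
  | succ k ih =>
      intro hstab h
      apply ih hstab
      apply step_back φ0 R (suffixW w (m + k)) (runFrom w χ m k)
      · intro σ hσ hrec hX hsat
        have hσχ : σ ∈ subf χ := recsub_runFrom w χ m k σ hrec hσ
        rw [suffixW_suffixW] at hsat
        exact hstab σ hrec hσχ hX (m + k + 1) (m + k) (by omega) (by omega) hsat
      · have h0 : (suffixW w (m + k)) 0 = w (m + k) := by simp [suffixW]
        rw [h0, suffixW_suffixW]
        show Sat (substFF (XSet φ0 R) (runFrom w χ m (k + 1))) (suffixW w (m + k + 1))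
        rw [show m + k + 1 = m + (k + 1) by omega]
        exact h

lemma evalA_nonBool_eq (A : FLTL Ap → Prop) {σ : FLTL Ap} (h : isRecShape σ) :
    evalA A σ = A σ := by
  cases σ <;> simp [evalA, isRecShape] at h ⊢

lemma evalA_to_substFF_sat (X : Set (FLTL Ap)) (hXtt : FLTL.tt ∉ X) (u : Word Ap)
    (A : FLTL Ap → Prop) :
    ∀ ψ : FLTL Ap, (∀ σ ∈ subf ψ, nonBool σ → (A σ → Sat (substFF X σ) u)) →
      evalA A ψ → Sat (substFF X ψ) u := by
  intro ψ
  induction ψ with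
  | conj a b iha ihb =>
      intro hyp h
      simp only [substFF, Sat]
      exact ⟨iha (fun σ hσ => hyp σ (subf_conj_left hσ)) h.1,
        ihb (fun σ hσ => hyp σ (subf_conj_right hσ)) h.2⟩
  | disj a b iha ihb =>
      intro hyp h
      simp only [substFF, Sat]
      exact h.imp (iha fun σ hσ => hyp σ (subf_disj_left hσ))
        (ihb fun σ hσ => hyp σ (subf_disj_right hσ))
  | tt =>
      intro _ _
      rw [substFF_nonBool _ _ (by trivial), if_neg hXtt]
      trivial
  | ff => intro _ h; exact absurd h (by simp [evalA])
  | atom a => intro hyp h; exact hyp _ (mem_subf_self _) (by trivial) h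
  | natom a => intro hyp h; exact hyp _ (mem_subf_self _) (by trivial) h
  | next a _ => intro hyp h; exact hyp _ (mem_subf_self _) (by trivial) h
  | fut a _ => intro hyp h; exact hyp _ (mem_subf_self _) (by trivial) h
  | glob a _ => intro hyp h; exact hyp _ (mem_subf_self _) (by trivial) h
  | untl a b _ _ => intro hyp h; exact hyp _ (mem_subf_self _) (by trivial) h
  | freq e c p a _ => intro hyp h; exact hyp _ (mem_subf_self _) (by trivial) h

/-- Provability from `R` yields pessimistic truth (size-bounded version). -/
lemma pproves_pess {φ0 : FLTL Ap} {R : Set (FLTL Ap)} {u : Word Ap} {k : ℕ} {ψ : FLTL Ap}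
    (hRshape : ∀ σ ∈ R, isRecShape σ)
    (hsat : ∀ σ ∈ R, sizeF σ ≤ k → Sat σ u)
    (hbnd : ∀ σ ∈ subf ψ, nonBool σ → sizeF σ ≤ k)
    (hp : pproves R ψ) : Sat (substFF (XSet φ0 R) ψ) u := by
  classical
  set A : FLTL Ap → Prop := fun σ => if sizeF σ ≤ k then Sat (substFF (XSet φ0 R) σ) u else σ ∈ R
    with hA
  have hAR : ∀ σ ∈ R, evalA A σ := by
    intro σ hσ
    rw [evalA_nonBool_eq A (hRshape σ hσ)]
    by_cases hk : sizeF σ ≤ k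
    · have hXσ : σ ∉ XSet φ0 R := mem_XSet_of_mem_R hσ (by
        have := hRshape σ hσ
        cases σ <;> simp [isRecShape, isUntlShape] at this ⊢)
      have hnb : nonBool σ := by
        have := hRshape σ hσ
        cases σ <;> simp [isRecShape, nonBool] at this ⊢
      rw [hA]
      simp only [if_pos hk]
      rw [substFF_nonBool _ _ hnb, if_neg hXσ]
      exact hsat σ hσ hk
    · rw [hA]; simp only [if_neg hk]; exact hσ
  have hev : evalA A ψ := hp A hAR
  refine evalA_to_substFF_sat _ tt_not_mem_XSet u A ψ ?_ hev
  intro σ hσ hnb hAσ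
  have hk := hbnd σ hσ hnb
  rwa [hA, if_pos hk] at hAσ

/-- Provability from `R` yields pessimistic truth (unbounded version). -/
lemma pproves_pess' {φ0 : FLTL Ap} {R : Set (FLTL Ap)} {u : Word Ap} {ψ : FLTL Ap}
    (hRshape : ∀ σ ∈ R, isRecShape σ)
    (hsat : ∀ σ ∈ R, Sat σ u)
    (hp : pproves R ψ) : Sat (substFF (XSet φ0 R) ψ) u := by
  set A : FLTL Ap → Prop := fun σ => Sat (substFF (XSet φ0 R) σ) u with hA
  have hAR : ∀ σ ∈ R, evalA A σ := by
    intro σ hσ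
    rw [evalA_nonBool_eq A (hRshape σ hσ)]
    have hXσ : σ ∉ XSet φ0 R := mem_XSet_of_mem_R hσ (by
      have := hRshape σ hσ
      cases σ <;> simp [isRecShape, isUntlShape] at this ⊢)
    have hnb : nonBool σ := by
      have := hRshape σ hσ
      cases σ <;> simp [isRecShape, nonBool] at this ⊢
    rw [hA]
    simp only
    rw [substFF_nonBool _ _ hnb, if_neg hXσ]
    exact hsat σ hσ
  exact evalA_to_substFF_sat _ tt_not_mem_XSet u A ψ (fun σ _ _ h => h) (hp A hAR)

/-- Size bound on non-Boolean subformulas is preserved by stepping. -/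
lemma bnd_step {k : ℕ} : ∀ χ : FLTL Ap,
    (∀ σ ∈ subf χ, nonBool σ → sizeF σ ≤ k) →
    ∀ ν, ∀ σ ∈ subf (step χ ν), nonBool σ → sizeF σ ≤ k := by
  intro χ
  induction χ with
  | conj a b iha ihb =>
      intro hb ν σ hσ hnb
      simp only [step, subf, Set.mem_insert_iff, Set.mem_union] at hσ
      rcases hσ with rfl | h | h
      · exact absurd hnb (by simp [nonBool])
      · exact iha (fun σ' hσ' => hb σ' (subf_conj_left hσ')) ν σ h hnb
      · exact ihb (fun σ' hσ' => hb σ' (subf_conj_right hσ')) ν σ h hnb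
  | disj a b iha ihb =>
      intro hb ν σ hσ hnb
      simp only [step, subf, Set.mem_insert_iff, Set.mem_union] at hσ
      rcases hσ with rfl | h | h
      · exact absurd hnb (by simp [nonBool])
      · exact iha (fun σ' hσ' => hb σ' (subf_disj_left hσ')) ν σ h hnb
      · exact ihb (fun σ' hσ' => hb σ' (subf_disj_right hσ')) ν σ h hnb
  | atom a =>
      intro hb ν σ hσ hnb
      have h1 : sizeF (FLTL.atom a : FLTL Ap) ≤ k :=
        hb _ (mem_subf_self _) (by trivial)
      simp only [step] at hσ
      split_ifs at hσ <;>
        (simp only [subf, Set.mem_singleton_iff] at hσ; subst hσ; simpa [sizeF] using h1)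
  | natom a =>
      intro hb ν σ hσ hnb
      have h1 : sizeF (FLTL.natom a : FLTL Ap) ≤ k :=
        hb _ (mem_subf_self _) (by trivial)
      simp only [step] at hσ
      split_ifs at hσ <;>
        (simp only [subf, Set.mem_singleton_iff] at hσ; subst hσ; simpa [sizeF] using h1)
  | next a _ =>
      intro hb ν σ hσ hnb
      exact hb σ (subf_next hσ) hnb
  | _ =>
      intro hb ν σ hσ hnb
      exact hb σ (by simpa [step] using hσ) hnb

lemma bnd_runFrom {k : ℕ} (w : Word Ap) (χ : FLTL Ap) (m : ℕ)
    (hb : ∀ σ ∈ subf χ, nonBool σ → sizeF σ ≤ k) :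
    ∀ j, ∀ σ ∈ subf (runFrom w χ m j), nonBool σ → sizeF σ ≤ k := by
  intro j
  induction j with
  | zero => exact hb
  | succ j ih => exact bnd_step (runFrom w χ m j) ih (w (m + j))

/-- From a provable sink reached by a slave run, truth of `ξ` at the birth time. -/
lemma sink_back {φ0 : FLTL Ap} {R : Set (FLTL Ap)} {w : Word Ap} {ξ : FLTL Ap}
    {T T' b j k : ℕ}
    (hRshape : ∀ σ ∈ R, isRecShape σ)
    (hrecsub : ∀ σ, isRecShape σ → σ ∈ subf ξ → σ ∈ RecSet φ0)
    (hstab : ∀ σ ∈ RecSet φ0, ∀ t t', T ≤ t → T ≤ t' →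
      (Sat σ (suffixW w t) ↔ Sat σ (suffixW w t')))
    (hsatR : ∀ σ ∈ R, sizeF σ ≤ k → ∀ t, T' ≤ t → Sat σ (suffixW w t))
    (hbnd : ∀ σ ∈ subf ξ, nonBool σ → sizeF σ ≤ k)
    (hbT : T ≤ b) (hbT' : T' ≤ b)
    (hp : pproves R (runFrom w ξ b j)) :
    Sat ξ (suffixW w b) := by
  have h1 : Sat (substFF (XSet φ0 R) (runFrom w ξ b j)) (suffixW w (b + j)) :=
    pproves_pess hRshape (fun σ hσ hk => hsatR σ hσ hk (b + j) (by omega))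
      (bnd_runFrom w ξ b hbnd j) hp
  have h2 : Sat (substFF (XSet φ0 R) ξ) (suffixW w b) := by
    refine chain_back φ0 R w ξ b j ?_ h1
    intro σ hrec hsub hX j' t hj ht
    exact (hstab σ (hrecsub σ hrec hsub) j' t (by omega) (by omega)).1
  exact substFF_weaken _ _ _ h2

/-- Main slave soundness: every element of `R` satisfies its recurrence condition. -/
lemma lemmaB {φ0 : FLTL Ap} {w : Word Ap} {R : Set (FLTL Ap)}
    (hR : R ⊆ RecSet φ0) (hprod : productAccept R w) :
    ∀ σ ∈ R, RsatCond w σ := by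
  obtain ⟨T, hstab⟩ := exists_stab φ0 w
  have hRshape : ∀ σ ∈ R, isRecShape σ := fun σ h => (hR h).2
  have hRfin : R.Finite := ((subf_finite φ0).subset fun σ hσ => hσ.1).subset hR
  suffices main : ∀ n, ∀ σ ∈ R, sizeF σ ≤ n → RsatCond w σ by
    intro σ hσ; exact main (sizeF σ) σ hσ le_rfl
  intro n
  induction n using Nat.strong_induction_on with
  | _ n ih =>
  intro σ hσ hn
  -- the cutoff and the "small members of R hold from `T'` on" fact
  have prelude : ∀ k : ℕ, k < n →
      ∃ T', ∀ ρ ∈ R, sizeF ρ ≤ k → ∀ t, T' ≤ t → Sat ρ (suffixW w t) := by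
    intro k hk
    have hfin' : {ρ ∈ R | sizeF ρ ≤ k}.Finite := hRfin.subset fun ρ hρ => hρ.1
    have hall : ∀ᶠ t in atTop, ∀ ρ ∈ {ρ ∈ R | sizeF ρ ≤ k}, Sat ρ (suffixW w t) :=
      (Set.Finite.eventually_all hfin').2 fun ρ hρ =>
        rsatCond_eventually (ih k hk ρ hρ.1 hρ.2)
    obtain ⟨T', hT'⟩ := Filter.eventually_atTop.1 hall
    exact ⟨T', fun ρ hρ hsz t ht => hT' t ht ρ ⟨hρ, hsz⟩⟩
  have hσsubφ : σ ∈ subf φ0 := (hR hσ).1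
  -- generic "accepting run from a provable sink" fact, given ξ with σ-shape
  have core : ∀ ξ : FLTL Ap, ξ ∈ subf σ → sizeF ξ < sizeF σ →
      ∃ K : ℕ, ∀ b j, K ≤ b → pproves R (runFrom w ξ b j) → Sat ξ (suffixW w b) := by
    intro ξ hξsub hξsz
    have hk : sizeF ξ < n := lt_of_lt_of_le hξsz hn
    obtain ⟨T', hT'⟩ := prelude (sizeF ξ) hk
    refine ⟨max T T', fun b j hb hp => ?_⟩
    refine sink_back (φ0 := φ0) hRshape ?_ hstab hT' ?_ ?_ ?_ hp
    · intro σ' hrec hsub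
      exact ⟨subf_trans φ0 σ hσsubφ (subf_trans σ ξ hξsub hsub), hrec⟩
    · exact fun σ' hσ' _ => sizeF_le_of_subf ξ σ' hσ'
    · omega
    · omega
  cases hshape : σ with
  | fut ξ =>
      subst hshape
      have hbuchi : buchiAcc R ξ w := hprod _ hσ
      obtain ⟨K, hK⟩ := core ξ (by
          simp only [subf]; exact Set.mem_insert_iff.2 (Or.inr (mem_subf_self ξ)))
        (by simp [sizeF])
      show Sat (FLTL.glob (FLTL.fut ξ)) w
      intro m
      obtain ⟨nn, hnn, ψ, hψmem, hsink, hprov⟩ :=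
        Filter.frequently_atTop.1 hbuchi (max K m + ad ξ)
      obtain ⟨b, hbn, hst⟩ := (mem_tokenSet_iff ξ w nn ψ).1 hψmem
      obtain ⟨hψeq, hns⟩ := tokState_some ξ w hst
      have hsle : nn ≤ b + ad ξ := tokState_le ξ w hst
      have hge : ad ξ ≤ nn - b := by
        by_contra hc
        exact (runFrom_not_sink w ξ b (by omega)) (hψeq ▸ hsink)
      have hb : b = nn - ad ξ := by omega
      have hbK : K ≤ b := by omega
      have hsat : Sat ξ (suffixW w b) := hK b (nn - b) hbK (hψeq ▸ hprov)
      refine ⟨b - m, ?_⟩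
      rwa [suffixW_suffixW, show m + (b - m) = b by omega]
  | glob ξ =>
      subst hshape
      have hco : coBuchiAcc R ξ w := hprod _ hσ
      obtain ⟨N, hN⟩ := Filter.eventually_atTop.1 hco
      obtain ⟨K, hK⟩ := core ξ (by
          simp only [subf]; exact Set.mem_insert_iff.2 (Or.inr (mem_subf_self ξ)))
        (by simp [sizeF])
      show Sat (FLTL.fut (FLTL.glob ξ)) w
      refine ⟨max K N, ?_⟩
      intro j
      rw [suffixW_suffixW]
      set b := max K N + j with hbdef
      have hsink : isSink (runFrom w ξ b (ad ξ)) := runFrom_sink_ad w ξ b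
      have hmem : runFrom w ξ b (ad ξ) ∈ tokenSet ξ w (b + ad ξ) :=
        runFrom_mem_tokenSet ξ w (self_mem_tokenSet ξ w b) (ad ξ)
          (fun j' hj' => runFrom_not_sink w ξ b hj')
      have hprov : pproves R (runFrom w ξ b (ad ξ)) := by
        by_contra hc
        exact hN (b + ad ξ) (by omega) ⟨runFrom w ξ b (ad ξ), hmem, hsink, hc⟩
      exact hK b (ad ξ) (by omega) hprov
  | freq e c p ξ =>
      subst hshape
      classical
      obtain ⟨K, hK⟩ := core ξ (by
          simp only [subf]; exact Set.mem_insert_iff.2 (Or.inr (mem_subf_self ξ)))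
        (by simp [sizeF])
      set indq : ℕ → ℝ := fun i => ind (Sat ξ (suffixW w i)) with hindq
      set reward : ℕ → ℝ := fun n => mpRewardFn R (tokenCount ξ w n) with hreward
      have hmp : Cmp.rel c (lr e reward) (p : ℝ) := hprod _ hσ
      set D : ℕ → Finset ℕ := fun n => (Finset.range (n + 1)).filter
        (fun b => ∃ ψ, tokState ξ w b n = some ψ ∧ isSink ψ ∧ pproves R ψ) with hD
      have hrnonneg : ∀ n, 0 ≤ reward n := fun n => tsum_nonneg fun ψ => Nat.cast_nonneg _
      -- (a) reward n ≤ card (D n)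
      have hrle : ∀ n, reward n ≤ ((D n).card : ℝ) := by
        intro n
        refine tsum_le_of_sum_le' (by positivity) ?_
        intro s
        have hdisj : ∀ ψ1 ∈ s, ∀ ψ2 ∈ s, ψ1 ≠ ψ2 →
            Disjoint ((Finset.range (n + 1)).filter (fun b => tokState ξ w b n = some ψ1.1))
              ((Finset.range (n + 1)).filter (fun b => tokState ξ w b n = some ψ2.1)) := by
          intro ψ1 _ ψ2 _ hne
          refine Finset.disjoint_left.2 fun b hb1 hb2 => ?_
          simp only [Finset.mem_filter] at hb1 hb2
          have : ψ1.1 = ψ2.1 := Option.some_injective _ (hb1.2 ▸ hb2.2 ▸ rfl)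
          exact hne (Subtype.ext this)
        have hcard : ∑ ψ ∈ s, tokenCount ξ w n ψ.1 =
            (s.biUnion (fun ψ => (Finset.range (n + 1)).filter
              (fun b => tokState ξ w b n = some ψ.1))).card :=
          (Finset.card_biUnion hdisj).symm
        have hsub : s.biUnion (fun ψ => (Finset.range (n + 1)).filter
            (fun b => tokState ξ w b n = some ψ.1)) ⊆ D n := by
          intro b hb
          simp only [Finset.mem_biUnion, Finset.mem_filter] at hb
          obtain ⟨ψ, _, hbr, hst⟩ := hb
          simp only [hD, Finset.mem_filter]
          exact ⟨hbr, ψ.1, hst, ψ.2.1, ψ.2.2⟩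
        calc ∑ ψ ∈ s, (tokenCount ξ w n ψ.1 : ℝ)
            = ((∑ ψ ∈ s, tokenCount ξ w n ψ.1 : ℕ) : ℝ) := by push_cast; ring
          _ ≤ ((D n).card : ℝ) := by
              rw [hcard]
              exact_mod_cast Finset.card_le_card hsub
      -- (d) per-b facts
      have hbSat : ∀ b n, K ≤ b → b ∈ D n → Sat ξ (suffixW w b) := by
        intro b n hKb hb
        simp only [hD, Finset.mem_filter, Finset.mem_range] at hb
        obtain ⟨hbn, ψ, hst, hsink, hprov⟩ := hb
        obtain ⟨hψeq, hns⟩ := tokState_some ξ w hst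
        exact hK b (n - b) hKb (hψeq ▸ hprov)
      have huniq : ∀ b n1 n2, b ∈ D n1 → b ∈ D n2 → n1 = n2 := by
        intro b n1 n2 h1 h2
        simp only [hD, Finset.mem_filter, Finset.mem_range] at h1 h2
        obtain ⟨hb1, ψ1, hst1, hs1, _⟩ := h1
        obtain ⟨hb2, ψ2, hst2, hs2, _⟩ := h2
        rcases lt_trichotomy n1 n2 with h | h | h
        · rw [tokState_none_after ξ w (by omega) hst1 hs1 h] at hst2; cases hst2
        · exact h
        · rw [tokState_none_after ξ w (by omega) hst2 hs2 h] at hst1; cases hst1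
      -- (e) counting in ℕ
      have hsum : ∀ N : ℕ, ∑ n ∈ Finset.range N, (D n).card ≤
          (∑ b ∈ Finset.range N, if Sat ξ (suffixW w b) then 1 else 0) + K := by
        intro N
        have h1 : ∀ n ∈ Finset.range N, (D n).card =
            ∑ b ∈ Finset.range N, if b ∈ D n then 1 else 0 := by
          intro n hn
          rw [← Finset.card_filter]
          congr 1
          rw [Finset.filter_mem_eq_inter]
          refine (Finset.inter_eq_right.2 ?_).symm
          intro b hb
          simp only [hD, Finset.mem_filter, Finset.mem_range] at hb
          simp only [Finset.mem_range] at hn ⊢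
          omega
        rw [Finset.sum_congr rfl h1, Finset.sum_comm]
        have hcard1 : ∀ b, ((Finset.range N).filter (fun n => b ∈ D n)).card ≤ 1 := by
          intro b
          refine Finset.card_le_one.2 fun n1 hn1 n2 hn2 => ?_
          simp only [Finset.mem_filter] at hn1 hn2
          exact huniq b n1 n2 hn1.2 hn2.2
        have h2 : ∀ b ∈ Finset.range N, (∑ n ∈ Finset.range N, if b ∈ D n then 1 else 0) ≤
            (if Sat ξ (suffixW w b) then 1 else 0) + (if b < K then 1 else 0) := by
          intro b _
          rw [← Finset.card_filter]
          by_cases hbK : K ≤ b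
          · by_cases hsat : Sat ξ (suffixW w b)
            · have := hcard1 b
              simp only [if_pos hsat]
              omega
            · have hemp : (Finset.range N).filter (fun n => b ∈ D n) = ∅ := by
                refine Finset.filter_eq_empty_iff.2 fun n _ => fun hmem => ?_
                exact hsat (hbSat b n hbK hmem)
              simp [hemp]
          · have := hcard1 b
            have hlt : b < K := by omega
            simp only [if_pos hlt]
            omega
        calc ∑ b ∈ Finset.range N, ∑ n ∈ Finset.range N, (if b ∈ D n then 1 else 0)
            ≤ ∑ b ∈ Finset.range N,
              ((if Sat ξ (suffixW w b) then 1 else 0) + (if b < K then 1 else 0)) :=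
              Finset.sum_le_sum h2
          _ = (∑ b ∈ Finset.range N, if Sat ξ (suffixW w b) then 1 else 0) +
              ∑ b ∈ Finset.range N, (if b < K then 1 else 0) := Finset.sum_add_distrib
          _ ≤ (∑ b ∈ Finset.range N, if Sat ξ (suffixW w b) then 1 else 0) + K := by
              have hsub2 : (Finset.range N).filter (fun b => b < K) ⊆ Finset.range K := by
                intro b hb
                simp only [Finset.mem_filter, Finset.mem_range] at hb ⊢
                omega
              have : ∑ b ∈ Finset.range N, (if b < K then 1 else 0) ≤ K := by
                rw [← Finset.card_filter]
                calc ((Finset.range N).filter (fun b => b < K)).card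
                    ≤ (Finset.range K).card := Finset.card_le_card hsub2
                  _ = K := Finset.card_range K
              omega
      -- (f) cesàro comparison
      have heps : ∀ ε : ℝ, 0 < ε → ∀ᶠ N in atTop, cesaro reward N ≤ cesaro indq N + ε := by
        intro ε hε
        have htend : Tendsto (fun N : ℕ => (K : ℝ) / N) atTop (nhds 0) :=
          tendsto_const_div_atTop_nhds_zero_nat (K : ℝ)
        filter_upwards [htend.eventually (gt_mem_nhds hε), eventually_ge_atTop 1] with N h1 h2
        have hN0 : (0 : ℝ) < N := by exact_mod_cast h2
        have hsumN : ∑ n ∈ Finset.range N, reward n ≤ (∑ b ∈ Finset.range N, indq b) + K := by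
          calc ∑ n ∈ Finset.range N, reward n
              ≤ ∑ n ∈ Finset.range N, ((D n).card : ℝ) :=
                Finset.sum_le_sum fun n _ => hrle n
            _ = ((∑ n ∈ Finset.range N, (D n).card : ℕ) : ℝ) := by push_cast; ring
            _ ≤ (((∑ b ∈ Finset.range N, if Sat ξ (suffixW w b) then 1 else 0) + K : ℕ) : ℝ) :=
                by exact_mod_cast hsum N
            _ = (∑ b ∈ Finset.range N, indq b) + K := by
                have hc : ∀ b : ℕ, indq b = ((if Sat ξ (suffixW w b) then 1 else 0 : ℕ) : ℝ) := by
                  intro b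
                  simp only [hindq]
                  unfold ind
                  split_ifs <;> simp
                rw [Finset.sum_congr rfl fun b _ => hc b]
                push_cast
                ring
        show cesaro reward N ≤ cesaro indq N + ε
        unfold cesaro
        calc (∑ j ∈ Finset.range N, reward j) / N
            ≤ ((∑ b ∈ Finset.range N, indq b) + K) / N := by
              gcongr
          _ = (∑ b ∈ Finset.range N, indq b) / N + K / N := by ring
          _ ≤ (∑ b ∈ Finset.range N, indq b) / N + ε := by linarith
      have hle : lr e reward ≤ lr e indq :=
        lr_le_lr (cesaro_nonneg hrnonneg) (cesaro_nonneg fun i => ind_nonneg _)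
          (cesaro_le zero_le_one fun i => ind_le_one _) heps e
      show Cmp.rel c (lr e indq) (p : ℝ)
      exact cmp_rel_mono _ hmp hle
  | tt => subst hshape; exact absurd (hRshape _ hσ) (by simp [isRecShape])
  | ff => subst hshape; exact absurd (hRshape _ hσ) (by simp [isRecShape])
  | atom a => subst hshape; exact absurd (hRshape _ hσ) (by simp [isRecShape])
  | natom a => subst hshape; exact absurd (hRshape _ hσ) (by simp [isRecShape])
  | conj a b => subst hshape; exact absurd (hRshape _ hσ) (by simp [isRecShape])
  | disj a b => subst hshape; exact absurd (hRshape _ hσ) (by simp [isRecShape])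
  | next a => subst hshape; exact absurd (hRshape _ hσ) (by simp [isRecShape])
  | untl a b => subst hshape; exact absurd (hRshape _ hσ) (by simp [isRecShape])

lemma tokenSet_recsub {ξ : FLTL Ap} {w : Word Ap} {n : ℕ} {χ : FLTL Ap}
    (hχ : χ ∈ tokenSet ξ w n) {σ : FLTL Ap} (hrec : isRecShape σ) (hsub : σ ∈ subf χ) :
    σ ∈ subf ξ := by
  obtain ⟨b, hb, hst⟩ := (mem_tokenSet_iff ξ w n χ).1 hχ
  obtain ⟨rfl, -⟩ := tokState_some ξ w hst
  exact recsub_runFrom w ξ b (n - b) σ hrec hsub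

end Soundness

/-- Proposition 1 (soundness of the final automaton). -/
theorem final_automaton_sound {Ap : Type} [Fintype Ap] (φ : FLTL Ap)
    (hφ : InFrag φ) (w : Word Ap) (hacc : finalAccept φ w) :
    Sat φ w := by
  obtain ⟨R, hR, hmaster, hprod⟩ := hacc
  have hRsat : ∀ σ ∈ R, RsatCond w σ := lemmaB hR hprod
  have hRshape : ∀ σ ∈ R, isRecShape σ := fun σ h => (hR h).2
  obtain ⟨T, hstab⟩ := exists_stab φ w
  have hRfin : R.Finite := ((subf_finite φ).subset fun σ hσ => hσ.1).subset hR
  have hallR : ∀ᶠ t in atTop, ∀ σ ∈ R, Sat σ (suffixW w t) :=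
    (Set.Finite.eventually_all hRfin).2 fun σ hσ => rsatCond_eventually (hRsat σ hσ)
  obtain ⟨TR, hTR⟩ := Filter.eventually_atTop.1 hallR
  have hGfin : {ξ : FLTL Ap | FLTL.glob ξ ∈ R}.Finite := by
    have : {ξ : FLTL Ap | FLTL.glob ξ ∈ R} = FLTL.glob ⁻¹' R := rfl
    rw [this]
    exact Set.Finite.preimage (fun a _ b _ h => by cases h; rfl) hRfin
  have hcoB : ∀ᶠ n in atTop, ∀ ξ ∈ {ξ : FLTL Ap | FLTL.glob ξ ∈ R},
      ¬ ∃ ψ ∈ tokenSet ξ w n, isSink ψ ∧ ¬ pproves R ψ := by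
    refine (Set.Finite.eventually_all hGfin).2 fun ξ hξ => ?_
    exact hprod _ hξ
  obtain ⟨N, hN⟩ := Filter.eventually_atTop.1 hcoB
  obtain ⟨n, hmp, hnM⟩ := (hmaster.and (eventually_ge_atTop (max (max T TR) N))).exists
  -- truth of all assumption formulas at time n
  have htok : ∀ ξ, FLTL.glob ξ ∈ R → ∀ χ0 ∈ tokenSet ξ w n,
      Sat (substFF (RecSet φ \ R) χ0) (suffixW w n) := by
    intro ξ hgR χ0 hχ0
    have hsink : isSink (runFrom w χ0 n (ad χ0)) := runFrom_sink_ad w χ0 n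
    have hmem : runFrom w χ0 n (ad χ0) ∈ tokenSet ξ w (n + ad χ0) :=
      runFrom_mem_tokenSet ξ w hχ0 (ad χ0) fun j hj => runFrom_not_sink w χ0 n hj
    have hprov : pproves R (runFrom w χ0 n (ad χ0)) := by
      by_contra hc
      exact hN (n + ad χ0) (by omega) ξ hgR ⟨_, hmem, hsink, hc⟩
    have h1 : Sat (substFF (XSet φ R) (runFrom w χ0 n (ad χ0))) (suffixW w (n + ad χ0)) :=
      pproves_pess' hRshape (fun σ hσ => hTR (n + ad χ0) (by omega) σ hσ) hprov
    have hGsubφ : FLTL.glob ξ ∈ subf φ := (hR hgR).1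
    have hξsubφ : ∀ σ, σ ∈ subf ξ → σ ∈ subf φ := by
      intro σ hσ
      refine subf_trans φ (FLTL.glob ξ) hGsubφ (subf_trans (FLTL.glob ξ) ξ ?_ hσ)
      simp only [subf]
      exact Set.mem_insert_iff.2 (Or.inr (mem_subf_self ξ))
    have h2 : Sat (substFF (XSet φ R) χ0) (suffixW w n) := by
      refine chain_back φ R w χ0 n (ad χ0) ?_ h1
      intro σ hrec hsub hX j t hj ht
      have hσξ : σ ∈ subf ξ := tokenSet_recsub hχ0 hrec hsub
      have hσφ : σ ∈ RecSet φ := ⟨hξsubφ σ hσξ, hrec⟩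
      exact (hstab σ hσφ j t (by omega) (by omega)).1
    exact substFF_mono_sat Set.subset_union_left (suffixW w n) χ0 h2
  -- instantiate provability with the truth assignment at time n
  have hev : evalA (fun χ => Sat χ (suffixW w n)) (masterRun φ w n) := by
    refine hmp (fun χ => Sat χ (suffixW w n)) ?_
    intro χ hχ
    rw [evalA_sat]
    rcases hχ with hχR | hχU
    · exact hTR n (by omega) χ hχR
    · simp only [Set.mem_iUnion] at hχU
      obtain ⟨ξ, hgR, χ0, hχ0, rfl⟩ := hχU
      exact htok ξ hgR χ0 hχ0
  exact masterRun_sat φ w n ((evalA_sat (suffixW w n) (masterRun φ w n)).1 hev)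

end Paper

end
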